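/- If the Lovász extension f^L of f: Dⁿ → ℝ is convex, then f is α-bisubmodular, i.e., for all a, b ∈ Dⁿ: f(a∧₀b) + α·f(a∨₀b) + (1-α)·f(a∨₁b) ≤ f(a) + f(b). -/

import Mathlib

open Finset

/-- The three-element domain `D = {-α, 0, 1}`, abstractly. -/
inductive D3 : Type
  | neg : D3
  | zero : D3
  | one : D3
deriving DecidableEq

instance : Fintype D3 :=
  ⟨{D3.neg, D3.zero, D3.one}, by rintro (_ | _ | _) <;> simp⟩

namespace D3

/-- The embedding of `D3` into `ℝ` sending `neg ↦ -α`, `zero ↦ 0`, `one ↦ 1`. -/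
def emb (α : ℝ) : D3 → ℝ
  | neg => -α
  | zero => 0
  | one => 1

/-- The partial order `0 ≺ 1`, `0 ≺ -α`, with `1` and `-α` incomparable. -/
instance : PartialOrder D3 where
  le x y := x = y ∨ x = zero
  le_refl x := Or.inl rfl
  le_trans x y z hxy hyz := by
    rcases hxy with rfl | rfl
    · exact hyz
    · exact Or.inr rfl
  le_antisymm x y hxy hyx := by
    rcases hxy with rfl | rfl
    · rfl
    · rcases hyx with rfl | rfl <;> rfl

/-- `∧₀` : `1 ∧₀ (-α) = (-α) ∧₀ 1 = 0`, and min w.r.t. `≺` otherwise. -/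
def meet0 (x y : D3) : D3 := if x = y then x else zero

/-- `∨₀` : `1 ∨₀ (-α) = (-α) ∨₀ 1 = 0`, and max w.r.t. `≺` otherwise. -/
def join0 (x y : D3) : D3 :=
  if x = y then x else if x = zero then y else if y = zero then x else zero

/-- `∨₁` : `1 ∨₁ (-α) = (-α) ∨₁ 1 = 1`, and max w.r.t. `≺` otherwise. -/
def join1 (x y : D3) : D3 :=
  if x = y then x else if x = zero then y else if y = zero then x else one

end D3

/-- Componentwise `∧₀` on `Dⁿ`. -/
def vmeet0 {n : ℕ} (a b : Fin n → D3) : Fin n → D3 := fun i => D3.meet0 (a i) (b i)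

/-- Componentwise `∨₀` on `Dⁿ`. -/
def vjoin0 {n : ℕ} (a b : Fin n → D3) : Fin n → D3 := fun i => D3.join0 (a i) (b i)

/-- Componentwise `∨₁` on `Dⁿ`. -/
def vjoin1 {n : ℕ} (a b : Fin n → D3) : Fin n → D3 := fun i => D3.join1 (a i) (b i)

/-- `lam` is a probability distribution on `Dⁿ`. -/
def IsDist (n : ℕ) (lam : (Fin n → D3) → ℝ) : Prop :=
  (∀ a, 0 ≤ lam a ∧ lam a ≤ 1) ∧ ∑ a : Fin n → D3, lam a = 1

/-- `lam` has marginal vector `x`, i.e. `Σ_a lam(a)·a = x` in `ℝⁿ`. -/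
def HasMarginal (α : ℝ) (n : ℕ) (lam : (Fin n → D3) → ℝ) (x : Fin n → ℝ) : Prop :=
  ∀ i, ∑ a : Fin n → D3, lam a * D3.emb α (a i) = x i

/-- The support of `lam` forms a chain w.r.t. the componentwise order on `Dⁿ`. -/
def ChainSupp (n : ℕ) (lam : (Fin n → D3) → ℝ) : Prop :=
  ∀ a b : Fin n → D3, lam a ≠ 0 → lam b ≠ 0 → a ≤ b ∨ b ≤ a

/-- The box `[-α,1]ⁿ`. -/
def Box (α : ℝ) (n : ℕ) : Set (Fin n → ℝ) := {x | ∀ i, x i ∈ Set.Icc (-α) 1}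

/-- `f : Dⁿ → ℝ` is α-bisubmodular. -/
def AlphaBisub (α : ℝ) (n : ℕ) (f : (Fin n → D3) → ℝ) : Prop :=
  ∀ a b : Fin n → D3,
    f (vmeet0 a b) + α * f (vjoin0 a b) + (1 - α) * f (vjoin1 a b) ≤ f a + f b

/-- Number of zero coordinates. -/
def zc {n : ℕ} (c : Fin n → D3) : ℕ := (Finset.univ.filter fun i => c i = D3.zero).card

/-- The convex closure `f⁻(x)`. -/
noncomputable def cClos (α : ℝ) (n : ℕ) (f : (Fin n → D3) → ℝ) (x : Fin n → ℝ) : ℝ :=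
  sInf {y | ∃ lam, IsDist n lam ∧ HasMarginal α n lam x ∧ y = ∑ a : Fin n → D3, lam a * f a}


def MM (n : ℕ) (μ : (Fin n → D3) → ℝ) (i : Fin n) (v : D3) : ℝ :=
  ∑ c : Fin n → D3, if c i = v then μ c else 0

def OnM (n : ℕ) (μ : (Fin n → D3) → ℝ) (i : Fin n) : ℝ :=
  ∑ c : Fin n → D3, if c i ≠ D3.zero then μ c else 0

lemma d3cases (x : D3) : x = D3.one ∨ x = D3.zero ∨ x = D3.neg := by cases x <;> simp

noncomputable def tOne (α : ℝ) : D3 → D3 → ℝ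
  | .one, .one => 1
  | .one, .zero => 1/2
  | .zero, .one => 1/2
  | .one, .neg => (1-α)/2
  | .neg, .one => (1-α)/2
  | _, _ => 0

noncomputable def tNeg : D3 → D3 → ℝ
  | .neg, .neg => 1
  | .neg, .zero => 1/2
  | .zero, .neg => 1/2
  | _, _ => 0

section
variable {n : ℕ} {μ : (Fin n → D3) → ℝ}

lemma L_sum_split (i : Fin n) :
    MM n μ i .one + MM n μ i .neg + MM n μ i .zero = ∑ c : Fin n → D3, μ c := by
  unfold MM
  rw [← Finset.sum_add_distrib, ← Finset.sum_add_distrib]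
  refine Finset.sum_congr rfl fun c _ => ?_
  rcases d3cases (c i) with h|h|h <;> simp [h]

lemma L_marg (α : ℝ) (i : Fin n) :
    ∑ c : Fin n → D3, μ c * D3.emb α (c i) = MM n μ i .one - α * MM n μ i .neg := by
  unfold MM
  rw [Finset.mul_sum, ← Finset.sum_sub_distrib]
  refine Finset.sum_congr rfl fun c _ => ?_
  rcases d3cases (c i) with h|h|h <;> simp [h, D3.emb] <;> ring

lemma L_On (i : Fin n) : OnM n μ i = MM n μ i .one + MM n μ i .neg := by
  unfold MM OnM
  rw [← Finset.sum_add_distrib]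
  refine Finset.sum_congr rfl fun c _ => ?_
  rcases d3cases (c i) with h|h|h <;> simp [h]

lemma L_nonneg (h0 : ∀ c, 0 ≤ μ c) (i : Fin n) (v : D3) : 0 ≤ MM n μ i v :=
  Finset.sum_nonneg fun c _ => by by_cases h : c i = v <;> simp [h, h0 c]

lemma L_le (h0 : ∀ c, 0 ≤ μ c) {c : Fin n → D3} {i : Fin n} {v : D3} (hc : c i = v) :
    μ c ≤ MM n μ i v := by
  have := Finset.single_le_sum (f := fun d => if d i = v then μ d else 0)
    (fun d _ => by by_cases h : d i = v <;> simp [h, h0 d]) (Finset.mem_univ c)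
  simpa [hc, MM] using this

lemma L_ne (h0 : ∀ c, 0 ≤ μ c) {c : Fin n → D3} {i : Fin n} {v : D3}
    (hM : MM n μ i v = 0) (hc : μ c ≠ 0) : c i ≠ v := by
  intro h
  exact hc (le_antisymm (hM ▸ L_le h0 h) (h0 c))

lemma L_exists {i : Fin n} {v : D3} (hM : MM n μ i v ≠ 0) : ∃ c, μ c ≠ 0 ∧ c i = v := by
  obtain ⟨c, -, hc⟩ := Finset.exists_ne_zero_of_sum_ne_zero hM
  by_cases h : c i = v
  · exact ⟨c, by simpa [h] using hc, h⟩
  · simp [h] at hc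

lemma L_disj (h0 : ∀ c, 0 ≤ μ c) (hch : ChainSupp n μ) (i : Fin n) :
    MM n μ i .one = 0 ∨ MM n μ i .neg = 0 := by
  by_contra h
  push_neg at h
  obtain ⟨c, hc, hc1⟩ := L_exists h.1
  obtain ⟨d, hd, hdn⟩ := L_exists h.2
  rcases hch c d hc hd with hle | hle
  · rcases hle i with h' | h' <;> simp [hc1, hdn] at h' <;> cases h'
  · rcases hle i with h' | h' <;> simp [hc1, hdn] at h' <;> cases h'

lemma L_G (h0 : ∀ c, 0 ≤ μ c) (hch : ChainSupp n μ) {c : Fin n → D3} {u w : Fin n}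
    (hc : μ c ≠ 0) (hu : c u ≠ D3.zero) (hw : c w = D3.zero) :
    OnM n μ w + μ c ≤ OnM n μ u := by
  have key : ∀ d, (if d w ≠ D3.zero then μ d else 0) ≤ (if d u ≠ D3.zero ∧ d ≠ c then μ d else 0) := by
    intro d
    by_cases hdw : d w ≠ D3.zero
    · by_cases hd : μ d = 0
      · simp [hdw, hd]
      · have hdc : d ≠ c := fun h => hdw (h ▸ hw)
        have hdu : d u ≠ D3.zero := by
          rcases hch d c hd hc with hle | hle
          · exact absurd ((hle w).resolve_right hdw ▸ hw) hdw
          · rcases hle u with h' | h'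
            · exact h' ▸ hu
            · exact absurd h' (fun h'' => hu h'')
        simp [hdw, hdu, hdc]
    · by_cases h' : d u ≠ D3.zero ∧ d ≠ c <;> simp [hdw, h', h0 d]
  have h1 : OnM n μ w ≤ ∑ d : Fin n → D3, (if d u ≠ D3.zero ∧ d ≠ c then μ d else 0) :=
    Finset.sum_le_sum fun d _ => key d
  have h2 : OnM n μ u = (∑ d : Fin n → D3, (if d u ≠ D3.zero ∧ d ≠ c then μ d else 0)) + μ c := by
    unfold OnM
    have e : ∀ d : Fin n → D3, (if d u ≠ D3.zero then μ d else 0)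
        = (if d u ≠ D3.zero ∧ d ≠ c then μ d else 0) + (if d = c then μ d else 0) := by
      intro d
      by_cases hdc : d = c
      · subst hdc; simp [hu]
      · by_cases hdu : d u ≠ D3.zero <;> simp [hdc, hdu]
    rw [Finset.sum_congr rfl (fun d _ => e d), Finset.sum_add_distrib,
      Finset.sum_ite_eq' Finset.univ c μ]
    simp
  linarith

lemma L_single {n : ℕ} {μ : (Fin n → D3) → ℝ} {P : (Fin n → D3) → Prop} [DecidablePred P]
    {t : Fin n → D3} (g : (Fin n → D3) → ℝ)
    (hgz : ∀ c, μ c = 0 → g c = 0)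
    (ht : P t) (huniq : ∀ c, μ c ≠ 0 → P c → c = t) :
    (∑ c : Fin n → D3, if P c then g c else 0) = g t := by
  rw [Finset.sum_eq_single t]
  · simp [ht]
  · intro c _ hne
    by_cases hz : μ c = 0
    · by_cases hP : P c <;> simp [hP, hgz c hz]
    · by_cases hP : P c
      · exact absurd (huniq c hz hP) hne
      · simp [hP]
  · intro h
    exact absurd (Finset.mem_univ t) h

lemma L_masses (α : ℝ) (hα : 0 < α) (hα1 : α ≤ 1) (h0 : ∀ c, 0 ≤ μ c)
    (h1 : ∑ c : Fin n → D3, μ c = 1) (hch : ChainSupp n μ) (a b : Fin n → D3)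
    (hm : ∀ i, ∑ c : Fin n → D3, μ c * D3.emb α (c i) = (D3.emb α (a i) + D3.emb α (b i)) / 2)
    (i : Fin n) :
    MM n μ i .one = tOne α (a i) (b i) ∧ MM n μ i .neg = tNeg (a i) (b i) := by
  have hmi := hm i
  rw [L_marg] at hmi
  have hn1 := L_nonneg h0 i D3.one
  have hnn := L_nonneg h0 i D3.neg
  have hn0 := L_nonneg h0 i D3.zero
  have hsum : MM n μ i .one + MM n μ i .neg + MM n μ i .zero = 1 := by
    rw [L_sum_split]; exact h1
  have hdisj := L_disj h0 hch i
  have hposn : 0 ≤ α * MM n μ i .neg := mul_nonneg hα.le hnn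
  rcases d3cases (a i) with ha|ha|ha <;> rcases d3cases (b i) with hb|hb|hb <;>
    rw [ha, hb] at hmi <;> simp only [D3.emb, tOne, tNeg] <;> rw [ha, hb] <;>
    simp only [D3.emb] at hmi
  · -- one one : M1 - α Mn = 1
    constructor <;> nlinarith
  · -- one zero
    rcases hdisj with h|h
    · rw [h] at hmi; nlinarith
    · rw [h] at hmi ⊢; constructor <;> linarith
  · -- one neg : = (1-α)/2
    rcases hdisj with h|h
    · rw [h] at hmi
      have : α * MM n μ i .neg = 0 := by linarith
      have hMn : MM n μ i .neg = 0 := by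
        rcases mul_eq_zero.mp this with h'|h'
        · exact absurd h' (ne_of_gt hα)
        · exact h'
      rw [hMn] at hmi
      refine ⟨?_, hMn⟩
      rw [h]; linarith
    · rw [h] at hmi ⊢; constructor <;> linarith
  · -- zero one
    rcases hdisj with h|h
    · rw [h] at hmi; nlinarith
    · rw [h] at hmi ⊢; constructor <;> linarith
  · -- zero zero
    rcases hdisj with h|h
    · rw [h] at hmi ⊢
      refine ⟨rfl, ?_⟩
      have : α * MM n μ i .neg = 0 := by linarith
      rcases mul_eq_zero.mp this with h'|h'
      · exact absurd h' (ne_of_gt hα)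
      · exact h'
    · rw [h] at hmi ⊢; exact ⟨by linarith, rfl⟩
  · -- zero neg : = -α/2
    rcases hdisj with h|h
    · rw [h] at hmi ⊢
      refine ⟨rfl, ?_⟩
      have : α * MM n μ i .neg = α * (1/2) := by linarith
      exact by linarith [mul_left_cancel₀ (ne_of_gt hα) this]
    · rw [h] at hmi; nlinarith
  · -- neg one
    rcases hdisj with h|h
    · rw [h] at hmi
      have : α * MM n μ i .neg = 0 := by linarith
      have hMn : MM n μ i .neg = 0 := by
        rcases mul_eq_zero.mp this with h'|h'
        · exact absurd h' (ne_of_gt hα)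
        · exact h'
      rw [hMn] at hmi
      refine ⟨?_, hMn⟩
      rw [h]; linarith
    · rw [h] at hmi ⊢; constructor <;> linarith
  · -- neg zero
    rcases hdisj with h|h
    · rw [h] at hmi ⊢
      refine ⟨rfl, ?_⟩
      have : α * MM n μ i .neg = α * (1/2) := by linarith
      exact by linarith [mul_left_cancel₀ (ne_of_gt hα) this]
    · rw [h] at hmi; nlinarith
  · -- neg neg : M1 - α Mn = -α
    have hMn1 : MM n μ i .neg ≤ 1 := by linarith
    have h' : MM n μ i .one ≤ α * (MM n μ i .neg - 1) := by linarith
    have h'' : α * (MM n μ i .neg - 1) ≤ 0 := by nlinarith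
    have hM1 : MM n μ i .one = 0 := le_antisymm (by linarith) hn1
    rw [hM1] at hmi
    refine ⟨hM1, ?_⟩
    have : α * MM n μ i .neg = α * 1 := by linarith
    linarith [mul_left_cancel₀ (ne_of_gt hα) this]

end
lemma mid_sum (α : ℝ) (hα : 0 < α) (hα1 : α ≤ 1) {n : ℕ} (a b : Fin n → D3)
    (μ : (Fin n → D3) → ℝ) (hd : IsDist n μ)
    (hm : ∀ i, ∑ c : Fin n → D3, μ c * D3.emb α (c i) = (D3.emb α (a i) + D3.emb α (b i)) / 2)
    (hch : ChainSupp n μ) (f : (Fin n → D3) → ℝ) :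
    ∑ c : Fin n → D3, μ c * f c
      = (f (vmeet0 a b) + α * f (vjoin0 a b) + (1 - α) * f (vjoin1 a b)) / 2 := by
  obtain ⟨hd0', hd1⟩ := hd
  have h0 : ∀ c, 0 ≤ μ c := fun c => (hd0' c).1
  have hpos : ∀ c, μ c ≠ 0 → 0 < μ c := fun c hc => lt_of_le_of_ne (h0 c) (Ne.symm hc)
  have hmass := L_masses α hα hα1 h0 hd1 hch a b hm
  have hOn : ∀ i, OnM n μ i = tOne α (a i) (b i) + tNeg (a i) (b i) := fun i => by
    rw [L_On, (hmass i).1, (hmass i).2]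
  have hoff : ∀ c, μ c ≠ 0 → ∀ i w, c w = D3.zero → OnM n μ i ≤ OnM n μ w → c i = D3.zero := by
    intro c hc i w hw hle
    by_contra hne
    have := L_G h0 hch hc hne hw
    have := hpos c hc
    linarith
  have hon : ∀ c, μ c ≠ 0 → ∀ i u, c u ≠ D3.zero → OnM n μ u ≤ OnM n μ i → c i ≠ D3.zero := by
    intro c hc i u hu hle hzi
    have := L_G h0 hch hc hu hzi
    have := hpos c hc
    linarith
  have hT : ∀ c, μ c ≠ 0 → ∀ i, a i = b i → c i = a i := by
    intro c hc i hab
    obtain ⟨hM1, hMn⟩ := hmass i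
    rw [← hab] at hM1 hMn
    have hM0 : MM n μ i .zero = 1 - MM n μ i .one - MM n μ i .neg := by
      have := L_sum_split (μ := μ) i
      rw [hd1] at this
      linarith
    rcases d3cases (a i) with ha|ha|ha <;> rw [ha] at hM1 hMn <;> rw [ha] <;>
      simp only [tOne, tNeg] at hM1 hMn
    · have hz : c i ≠ D3.zero := L_ne h0 (by rw [hM0, hM1, hMn]; ring) hc
      have hn : c i ≠ D3.neg := L_ne h0 hMn hc
      rcases d3cases (c i) with h|h|h
      · exact h
      · exact absurd h hz
      · exact absurd h hn
    · have h1' : c i ≠ D3.one := L_ne h0 hM1 hc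
      have hn : c i ≠ D3.neg := L_ne h0 hMn hc
      rcases d3cases (c i) with h|h|h
      · exact absurd h h1'
      · exact h
      · exact absurd h hn
    · have hz : c i ≠ D3.zero := L_ne h0 (by rw [hM0, hM1, hMn]; ring) hc
      have h1' : c i ≠ D3.one := L_ne h0 hM1 hc
      rcases d3cases (c i) with h|h|h
      · exact absurd h h1'
      · exact absurd h hz
      · exact h
  have hvone : ∀ (c : Fin n → D3) (i : Fin n), μ c ≠ 0 → c i ≠ D3.zero →
      tNeg (a i) (b i) = 0 → c i = D3.one := by
    intro c i hc hnz ht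
    have hnn : c i ≠ D3.neg := L_ne h0 (by rw [(hmass i).2, ht]) hc
    rcases d3cases (c i) with h|h|h
    · exact h
    · exact absurd h hnz
    · exact absurd h hnn
  have hvneg : ∀ (c : Fin n → D3) (i : Fin n), μ c ≠ 0 → c i ≠ D3.zero →
      tOne α (a i) (b i) = 0 → c i = D3.neg := by
    intro c i hc hnz ht
    have hn1 : c i ≠ D3.one := L_ne h0 (by rw [(hmass i).1, ht]) hc
    rcases d3cases (c i) with h|h|h
    · exact absurd h hn1
    · exact absurd h hnz
    · exact h
  have hOnoff : ∀ i, a i ≠ b i → OnM n μ i ≤ 1/2 ∧ (1-α)/2 ≤ OnM n μ i := by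
    intro i h
    rw [hOn i]
    rcases d3cases (a i) with h1|h1|h1 <;> rcases d3cases (b i) with h2|h2|h2 <;>
      rw [h1, h2] at h ⊢ <;>
      first
        | exact absurd rfl h
        | (simp only [tOne, tNeg]; constructor <;> linarith)
  have hOnPval : ∀ i, a i ≠ b i → (a i = D3.zero ∨ b i = D3.zero) → OnM n μ i = 1/2 := by
    intro i h hz
    rw [hOn i]
    rcases d3cases (a i) with h1|h1|h1 <;> rcases d3cases (b i) with h2|h2|h2 <;>
      rw [h1, h2] at h hz ⊢ <;>
      first
        | exact absurd rfl h
        | (simp only [tOne, tNeg]; norm_num; done)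
        | (simp at hz; done)
  have hOnQval : ∀ i, a i ≠ b i → ¬(a i = D3.zero ∨ b i = D3.zero) → OnM n μ i = (1-α)/2 := by
    intro i h hz
    push_neg at hz
    rw [hOn i]
    rcases d3cases (a i) with h1|h1|h1 <;> rcases d3cases (b i) with h2|h2|h2 <;>
      rw [h1, h2] at h hz ⊢ <;>
      first
        | exact absurd rfl h
        | (exact absurd rfl hz.1)
        | (exact absurd rfl hz.2)
        | (simp only [tOne, tNeg]; ring_nf; done)
        | (simp only [tOne, tNeg]; norm_num; done)
  -- generic reconstruction lemmas (parameterized by witnesses)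
  have r1gen : ∀ q : Fin n, ((a q = D3.one ∧ b q = D3.neg) ∨ (a q = D3.neg ∧ b q = D3.one)) →
      ∀ c, μ c ≠ 0 → c q ≠ D3.zero → c = vjoin1 a b := by
    intro q hq c hc hcq
    have habq : a q ≠ b q := by
      rcases hq with ⟨h1, h2⟩|⟨h1, h2⟩ <;> rw [h1, h2] <;> simp
    have hOnq : OnM n μ q = (1-α)/2 := by
      apply hOnQval q habq
      rcases hq with ⟨h1, h2⟩|⟨h1, h2⟩ <;> rw [h1, h2] <;> simp
    funext i
    by_cases hab : a i = b i
    · rw [hT c hc i hab]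
      simp [vjoin1, D3.join1, ← hab]
    · have hnz : c i ≠ D3.zero :=
        hon c hc i q hcq (by rw [hOnq]; exact (hOnoff i hab).2)
      rcases d3cases (a i) with h1|h1|h1 <;> rcases d3cases (b i) with h2|h2|h2 <;>
        rw [h1, h2] at hab <;>
        first
          | exact absurd rfl hab
          | (rw [hvone c i hc hnz (by simp [h1, h2, tNeg])];
             simp [vjoin1, D3.join1, h1, h2]; done)
          | (rw [hvneg c i hc hnz (by simp [h1, h2, tOne])];
             simp [vjoin1, D3.join1, h1, h2]; done)
  have rmP : ∀ p : Fin n, a p ≠ b p → (a p = D3.zero ∨ b p = D3.zero) →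
      ∀ c, μ c ≠ 0 → c p = D3.zero → c = vmeet0 a b := by
    intro p hp1 hp2 c hc hcp
    have hOnp : OnM n μ p = 1/2 := hOnPval p hp1 hp2
    funext i
    by_cases hab : a i = b i
    · rw [hT c hc i hab]
      simp [vmeet0, D3.meet0, ← hab]
    · have hz : c i = D3.zero :=
        hoff c hc i p hcp (by rw [hOnp]; exact (hOnoff i hab).1)
      rw [hz]
      simp [vmeet0, D3.meet0, hab]
  have r0gen : ∀ p q : Fin n, a p ≠ b p → (a p = D3.zero ∨ b p = D3.zero) →
      ((a q = D3.one ∧ b q = D3.neg) ∨ (a q = D3.neg ∧ b q = D3.one)) →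
      ∀ c, μ c ≠ 0 → c p ≠ D3.zero → c q = D3.zero → c = vjoin0 a b := by
    intro p q hp1 hp2 hq c hc hcp hcq
    have hOnp : OnM n μ p = 1/2 := hOnPval p hp1 hp2
    have habq : a q ≠ b q := by
      rcases hq with ⟨h1, h2⟩|⟨h1, h2⟩ <;> rw [h1, h2] <;> simp
    have hOnq : OnM n μ q = (1-α)/2 := by
      apply hOnQval q habq
      rcases hq with ⟨h1, h2⟩|⟨h1, h2⟩ <;> rw [h1, h2] <;> simp
    funext i
    by_cases hab : a i = b i
    · rw [hT c hc i hab]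
      simp [vjoin0, D3.join0, ← hab]
    · by_cases hPz : a i = D3.zero ∨ b i = D3.zero
      · have hnz : c i ≠ D3.zero :=
          hon c hc i p hcp (by rw [hOnp, hOnPval i hab hPz])
        rcases d3cases (a i) with h1|h1|h1 <;> rcases d3cases (b i) with h2|h2|h2 <;>
          rw [h1, h2] at hab hPz <;>
          first
            | exact absurd rfl hab
            | (exfalso; rcases hPz with h'|h' <;> simp at h'; done)
            | (rw [hvone c i hc hnz (by simp [h1, h2, tNeg])];
               simp [vjoin0, D3.join0, h1, h2]; done)
            | (rw [hvneg c i hc hnz (by simp [h1, h2, tOne])];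
               simp [vjoin0, D3.join0, h1, h2]; done)
      · have hz : c i = D3.zero :=
          hoff c hc i q hcq (by rw [hOnq, hOnQval i hab hPz])
        rw [hz]
        push_neg at hPz
        rcases d3cases (a i) with h1|h1|h1 <;> rcases d3cases (b i) with h2|h2|h2 <;>
          rw [h1, h2] at hab hPz <;>
          first
            | exact absurd rfl hab
            | (exact absurd rfl hPz.1)
            | (exact absurd rfl hPz.2)
            | (simp [vjoin0, D3.join0, h1, h2]; done)
  have hcompl : ∀ w : Fin n, (∑ c : Fin n → D3, if c w = D3.zero then μ c else 0) = 1 - OnM n μ w := by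
    intro w
    unfold OnM
    rw [← hd1, ← Finset.sum_sub_distrib]
    refine Finset.sum_congr rfl fun c _ => ?_
    by_cases h : c w = D3.zero <;> simp [h]
  by_cases hPw : ∃ p, a p ≠ b p ∧ (a p = D3.zero ∨ b p = D3.zero)
  · obtain ⟨p, hp1, hp2⟩ := hPw
    have hOnp : OnM n μ p = 1/2 := hOnPval p hp1 hp2
    have rm := rmP p hp1 hp2
    have hpts_p : vmeet0 a b p = D3.zero ∧ vjoin0 a b p ≠ D3.zero ∧ vjoin1 a b p ≠ D3.zero := by
      rcases d3cases (a p) with ha|ha|ha <;> rcases d3cases (b p) with hb|hb|hb <;>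
        rw [ha, hb] at hp1 hp2 <;>
        first
          | exact absurd rfl hp1
          | (exfalso; rcases hp2 with h'|h' <;> simp at h'; done)
          | (refine ⟨?_, ?_, ?_⟩ <;> simp [vmeet0, vjoin0, vjoin1, D3.meet0, D3.join0, D3.join1, ha, hb]; done)
    have e1 : μ (vmeet0 a b) = 1/2 := by
      have hs := L_single (μ := μ) (P := fun c => c p = D3.zero) μ (fun c h => h)
        hpts_p.1 (fun c hc hP => rm c hc hP)
      rw [hcompl p, hOnp] at hs
      linarith
    by_cases hQw : ∃ q, (a q = D3.one ∧ b q = D3.neg) ∨ (a q = D3.neg ∧ b q = D3.one)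
    · -- Case A : both P and Q witnesses
      obtain ⟨q, hq⟩ := hQw
      have habq : a q ≠ b q := by
        rcases hq with ⟨h1, h2⟩|⟨h1, h2⟩ <;> rw [h1, h2] <;> simp
      have hOnq : OnM n μ q = (1-α)/2 := by
        apply hOnQval q habq
        rcases hq with ⟨h1, h2⟩|⟨h1, h2⟩ <;> rw [h1, h2] <;> simp
      have r0 := r0gen p q hp1 hp2 hq
      have r1 := r1gen q hq
      have hpts_q : vmeet0 a b q = D3.zero ∧ vjoin0 a b q = D3.zero ∧ vjoin1 a b q = D3.one := by
        rcases hq with ⟨h1, h2⟩|⟨h1, h2⟩ <;>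
          refine ⟨?_, ?_, ?_⟩ <;> simp [vmeet0, vjoin0, vjoin1, D3.meet0, D3.join0, D3.join1, h1, h2]
      have hmj0 : vmeet0 a b ≠ vjoin0 a b := by
        intro h
        apply hpts_p.2.1
        rw [← congrFun h p, hpts_p.1]
      have hmj1 : vmeet0 a b ≠ vjoin1 a b := by
        intro h
        apply hpts_p.2.2
        rw [← congrFun h p, hpts_p.1]
      have hj01 : vjoin0 a b ≠ vjoin1 a b := by
        intro h
        have := congrFun h q
        rw [hpts_q.2.1, hpts_q.2.2] at this
        cases this
      have hclass : ∀ c, μ c ≠ 0 → c = vmeet0 a b ∨ c = vjoin0 a b ∨ c = vjoin1 a b := by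
        intro c hc
        by_cases h1 : c p = D3.zero
        · exact Or.inl (rm c hc h1)
        · by_cases h2 : c q = D3.zero
          · exact Or.inr (Or.inl (r0 c hc h1 h2))
          · exact Or.inr (Or.inr (r1 c hc h2))
      have hsplit3 : ∀ g : (Fin n → D3) → ℝ, (∀ c, μ c = 0 → g c = 0) →
          (∑ c : Fin n → D3, g c) = g (vmeet0 a b) + g (vjoin0 a b) + g (vjoin1 a b) := by
        intro g hg
        have e : ∀ c : Fin n → D3, g c = (if c = vmeet0 a b then g c else 0)
            + (if c = vjoin0 a b then g c else 0) + (if c = vjoin1 a b then g c else 0) := by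
          intro c
          by_cases hz : μ c = 0
          · simp [hg c hz]
          · rcases hclass c hz with rfl|rfl|rfl
            · simp [hmj0, hmj1]
            · simp [Ne.symm hmj0, hj01]
            · simp [Ne.symm hmj1, Ne.symm hj01]
        rw [Finset.sum_congr rfl fun c _ => e c, Finset.sum_add_distrib, Finset.sum_add_distrib]
        simp [Finset.sum_ite_eq']
      have e2 : μ (vjoin1 a b) = (1-α)/2 := by
        have hs := L_single (μ := μ) (P := fun c => c q ≠ D3.zero) μ (fun c h => h)
          (by show vjoin1 a b q ≠ D3.zero; rw [hpts_q.2.2]; simp) (fun c hc hP => r1 c hc hP)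
        rw [show (∑ c : Fin n → D3, if c q ≠ D3.zero then μ c else 0) = OnM n μ q from rfl, hOnq] at hs
        linarith
      have htot := hsplit3 μ (fun c h => h)
      rw [hd1] at htot
      have e3 : μ (vjoin0 a b) = α/2 := by linarith
      have hsf := hsplit3 (fun c => μ c * f c) (fun c h => by simp [h])
      rw [hsf, e1, e2, e3]
      ring
    · -- Case B : P witness, no Q
      rw [not_exists] at hQw
      have hnoQ : ∀ i, a i ≠ b i → a i = D3.zero ∨ b i = D3.zero := by
        intro i hab
        by_contra hPz
        push_neg at hPz
        apply hQw i
        rcases d3cases (a i) with h1|h1|h1 <;> rcases d3cases (b i) with h2|h2|h2 <;>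
          rw [h1, h2] at hab hPz <;>
          first
            | exact absurd rfl hab
            | exact absurd rfl hPz.1
            | exact absurd rfl hPz.2
            | exact Or.inl ⟨h1, h2⟩
            | exact Or.inr ⟨h1, h2⟩
      have hJ01 : vjoin0 a b = vjoin1 a b := by
        funext i
        by_cases hab : a i = b i
        · simp [vjoin0, vjoin1, D3.join0, D3.join1, ← hab]
        · rcases hnoQ i hab with h'|h'
          · simp [vjoin0, vjoin1, D3.join0, D3.join1, h', hab]
          · have hane : a i ≠ D3.zero := fun h => hab (h.trans h'.symm)
            simp [vjoin0, vjoin1, D3.join0, D3.join1, h', hane, hab]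
      have r0' : ∀ c, μ c ≠ 0 → c p ≠ D3.zero → c = vjoin0 a b := by
        intro c hc hcp
        funext i
        by_cases hab : a i = b i
        · rw [hT c hc i hab]
          simp [vjoin0, D3.join0, ← hab]
        · have hPz := hnoQ i hab
          have hnz : c i ≠ D3.zero := hon c hc i p hcp (by rw [hOnp, hOnPval i hab hPz])
          rcases d3cases (a i) with h1|h1|h1 <;> rcases d3cases (b i) with h2|h2|h2 <;>
            rw [h1, h2] at hab hPz <;>
            first
              | exact absurd rfl hab
              | (exfalso; rcases hPz with h'|h' <;> simp at h'; done)
              | (rw [hvone c i hc hnz (by simp [h1, h2, tNeg])];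
                 simp [vjoin0, D3.join0, h1, h2]; done)
              | (rw [hvneg c i hc hnz (by simp [h1, h2, tOne])];
                 simp [vjoin0, D3.join0, h1, h2]; done)
      have hmj0 : vmeet0 a b ≠ vjoin0 a b := by
        intro h
        apply hpts_p.2.1
        rw [← congrFun h p, hpts_p.1]
      have hclass : ∀ c, μ c ≠ 0 → c = vmeet0 a b ∨ c = vjoin0 a b := by
        intro c hc
        by_cases h1 : c p = D3.zero
        · exact Or.inl (rm c hc h1)
        · exact Or.inr (r0' c hc h1)
      have hsplit2 : ∀ g : (Fin n → D3) → ℝ, (∀ c, μ c = 0 → g c = 0) →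
          (∑ c : Fin n → D3, g c) = g (vmeet0 a b) + g (vjoin0 a b) := by
        intro g hg
        have e : ∀ c : Fin n → D3, g c = (if c = vmeet0 a b then g c else 0)
            + (if c = vjoin0 a b then g c else 0) := by
          intro c
          by_cases hz : μ c = 0
          · simp [hg c hz]
          · rcases hclass c hz with rfl|rfl
            · simp [hmj0]
            · simp [Ne.symm hmj0]
        rw [Finset.sum_congr rfl fun c _ => e c, Finset.sum_add_distrib]
        simp [Finset.sum_ite_eq']
      have htot := hsplit2 μ (fun c h => h)
      rw [hd1] at htot
      have e2 : μ (vjoin0 a b) = 1/2 := by linarith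
      have hsf := hsplit2 (fun c => μ c * f c) (fun c h => by simp [h])
      rw [← hJ01, hsf, e1, e2]
      ring
  · -- no P witness
    rw [not_exists] at hPw
    have hPempty : ∀ i, a i ≠ b i → ¬(a i = D3.zero ∨ b i = D3.zero) := fun i h h' => hPw i ⟨h, h'⟩
    have hMJ0 : vmeet0 a b = vjoin0 a b := by
      funext i
      by_cases hab : a i = b i
      · simp [vmeet0, vjoin0, D3.meet0, D3.join0, ← hab]
      · have h' := hPempty i hab
        push_neg at h'
        simp [vmeet0, vjoin0, D3.meet0, D3.join0, hab, h'.1, h'.2]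
    by_cases hQw : ∃ q, (a q = D3.one ∧ b q = D3.neg) ∨ (a q = D3.neg ∧ b q = D3.one)
    · -- Case C
      obtain ⟨q, hq⟩ := hQw
      have habq : a q ≠ b q := by
        rcases hq with ⟨h1, h2⟩|⟨h1, h2⟩ <;> rw [h1, h2] <;> simp
      have hOnq : OnM n μ q = (1-α)/2 := by
        apply hOnQval q habq
        rcases hq with ⟨h1, h2⟩|⟨h1, h2⟩ <;> rw [h1, h2] <;> simp
      have r1 := r1gen q hq
      have rm' : ∀ c, μ c ≠ 0 → c q = D3.zero → c = vmeet0 a b := by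
        intro c hc hcq
        funext i
        by_cases hab : a i = b i
        · rw [hT c hc i hab]
          simp [vmeet0, D3.meet0, ← hab]
        · have hz : c i = D3.zero :=
            hoff c hc i q hcq (by rw [hOnq, hOnQval i hab (hPempty i hab)])
          rw [hz]
          simp [vmeet0, D3.meet0, hab]
      have hpts_q : vmeet0 a b q = D3.zero ∧ vjoin1 a b q = D3.one := by
        rcases hq with ⟨h1, h2⟩|⟨h1, h2⟩ <;>
          constructor <;> simp [vmeet0, vjoin1, D3.meet0, D3.join1, h1, h2]
      have hmj1 : vmeet0 a b ≠ vjoin1 a b := by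
        intro h
        have := congrFun h q
        rw [hpts_q.1, hpts_q.2] at this
        cases this
      have hclass : ∀ c, μ c ≠ 0 → c = vmeet0 a b ∨ c = vjoin1 a b := by
        intro c hc
        by_cases h1 : c q = D3.zero
        · exact Or.inl (rm' c hc h1)
        · exact Or.inr (r1 c hc h1)
      have hsplit2 : ∀ g : (Fin n → D3) → ℝ, (∀ c, μ c = 0 → g c = 0) →
          (∑ c : Fin n → D3, g c) = g (vmeet0 a b) + g (vjoin1 a b) := by
        intro g hg
        have e : ∀ c : Fin n → D3, g c = (if c = vmeet0 a b then g c else 0)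
            + (if c = vjoin1 a b then g c else 0) := by
          intro c
          by_cases hz : μ c = 0
          · simp [hg c hz]
          · rcases hclass c hz with rfl|rfl
            · simp [hmj1]
            · simp [Ne.symm hmj1]
        rw [Finset.sum_congr rfl fun c _ => e c, Finset.sum_add_distrib]
        simp [Finset.sum_ite_eq']
      have e2 : μ (vjoin1 a b) = (1-α)/2 := by
        have hs := L_single (μ := μ) (P := fun c => c q ≠ D3.zero) μ (fun c h => h)
          (by show vjoin1 a b q ≠ D3.zero; rw [hpts_q.2]; simp) (fun c hc hP => r1 c hc hP)
        rw [show (∑ c : Fin n → D3, if c q ≠ D3.zero then μ c else 0) = OnM n μ q from rfl, hOnq] at hs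
        linarith
      have htot := hsplit2 μ (fun c h => h)
      rw [hd1] at htot
      have e1 : μ (vmeet0 a b) = (1+α)/2 := by linarith
      have hsf := hsplit2 (fun c => μ c * f c) (fun c h => by simp [h])
      rw [← hMJ0, hsf, e1, e2]
      ring
    · -- Case D : all coordinates diagonal
      rw [not_exists] at hQw
      have hdiag : ∀ i, a i = b i := by
        intro i
        by_contra hab
        have hPz := hPempty i hab
        push_neg at hPz
        apply hQw i
        rcases d3cases (a i) with h1|h1|h1 <;> rcases d3cases (b i) with h2|h2|h2 <;>
          rw [h1, h2] at hab hPz <;>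
          first
            | exact absurd rfl hab
            | exact absurd rfl hPz.1
            | exact absurd rfl hPz.2
            | exact Or.inl ⟨h1, h2⟩
            | exact Or.inr ⟨h1, h2⟩
      have hJ01 : vjoin0 a b = vjoin1 a b := by
        funext i
        simp [vjoin0, vjoin1, D3.join0, D3.join1, ← hdiag i]
      have hall : ∀ c, μ c ≠ 0 → c = vmeet0 a b := by
        intro c hc
        funext i
        rw [hT c hc i (hdiag i)]
        simp [vmeet0, D3.meet0, ← hdiag i]
      have e1 : μ (vmeet0 a b) = 1 := by
        have hs := L_single (μ := μ) (P := fun _ => True) μ (fun c h => h)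
          trivial (fun c hc _ => hall c hc)
        simp at hs
        rw [hd1] at hs
        linarith
      have hsf : (∑ c : Fin n → D3, μ c * f c) = μ (vmeet0 a b) * f (vmeet0 a b) := by
        have e : ∀ c : Fin n → D3, μ c * f c = (if c = vmeet0 a b then μ c * f c else 0) := by
          intro c
          by_cases hz : μ c = 0
          · simp [hz]
          · rw [hall c hz]
            simp
        rw [Finset.sum_congr rfl fun c _ => e c]
        simp [Finset.sum_ite_eq']
      rw [hsf, e1, ← hMJ0, ← hJ01, ← hMJ0]
      ring

lemma videm0 {n : ℕ} (a : Fin n → D3) : vmeet0 a a = a := by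
  funext i; simp [vmeet0, D3.meet0]

lemma videmj0 {n : ℕ} (a : Fin n → D3) : vjoin0 a a = a := by
  funext i; simp [vjoin0, D3.join0]

lemma videmj1 {n : ℕ} (a : Fin n → D3) : vjoin1 a a = a := by
  funext i; simp [vjoin1, D3.join1]

/-- if the Lovász extension is convex then `f` is α-bisubmodular. -/
theorem stmt7 (α : ℝ) (hα : α ∈ Set.Ioc (0 : ℝ) 1) (n : ℕ) (f : (Fin n → D3) → ℝ)
    (Λ : (Fin n → ℝ) → (Fin n → D3) → ℝ)
    (hΛ : ∀ x ∈ Box α n, IsDist n (Λ x) ∧ HasMarginal α n (Λ x) x ∧ ChainSupp n (Λ x))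
    (hconv : ConvexOn ℝ (Box α n) fun x => ∑ a : Fin n → D3, Λ x a * f a) :
    AlphaBisub α n f := by
  obtain ⟨hα0, hα1⟩ := hα
  intro a b
  have hemb : ∀ u : D3, D3.emb α u ∈ Set.Icc (-α) 1 := by
    intro u
    cases u <;> constructor <;> simp [D3.emb] <;> linarith
  have hbox : ∀ u : Fin n → D3, (fun i => D3.emb α (u i)) ∈ Box α n := fun u i => hemb (u i)
  set xa : Fin n → ℝ := fun i => D3.emb α (a i) with hxa
  set xb : Fin n → ℝ := fun i => D3.emb α (b i) with hxb
  set xm : Fin n → ℝ := fun i => (D3.emb α (a i) + D3.emb α (b i)) / 2 with hxm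
  have hxm_mem : xm ∈ Box α n := by
    intro i
    have h1 := hemb (a i)
    have h2 := hemb (b i)
    obtain ⟨h1a, h1b⟩ := h1
    obtain ⟨h2a, h2b⟩ := h2
    have hxmi : xm i = (D3.emb α (a i) + D3.emb α (b i)) / 2 := rfl
    rw [Set.mem_Icc, hxmi]
    constructor <;> linarith
  obtain ⟨hda, hma, hca⟩ := hΛ xa (hbox a)
  obtain ⟨hdb, hmb, hcb⟩ := hΛ xb (hbox b)
  obtain ⟨hdm, hmm, hcm⟩ := hΛ xm hxm_mem
  have ga : (∑ c : Fin n → D3, Λ xa c * f c) = f a := by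
    have h := mid_sum α hα0 hα1 a a (Λ xa) hda
      (fun i => by rw [hma i]; show D3.emb α (a i) = _; ring) hca f
    rw [h, videm0, videmj0, videmj1]
    ring
  have gb : (∑ c : Fin n → D3, Λ xb c * f c) = f b := by
    have h := mid_sum α hα0 hα1 b b (Λ xb) hdb
      (fun i => by rw [hmb i]; show D3.emb α (b i) = _; ring) hcb f
    rw [h, videm0, videmj0, videmj1]
    ring
  have gm : (∑ c : Fin n → D3, Λ xm c * f c)
      = (f (vmeet0 a b) + α * f (vjoin0 a b) + (1 - α) * f (vjoin1 a b)) / 2 :=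
    mid_sum α hα0 hα1 a b (Λ xm) hdm (fun i => hmm i) hcm f
  have hmid : (1/2 : ℝ) • xa + (1/2 : ℝ) • xb = xm := by
    funext i
    simp only [Pi.add_apply, Pi.smul_apply, smul_eq_mul, hxa, hxb, hxm]
    ring
  have hcvx := hconv.2 (hbox a) (hbox b) (by norm_num : (0:ℝ) ≤ 1/2)
    (by norm_num : (0:ℝ) ≤ 1/2) (by norm_num : (1:ℝ)/2 + 1/2 = 1)
  rw [hmid] at hcvx
  simp only at hcvx
  rw [ga, gb, gm] at hcvx
  simp only [smul_eq_mul] at hcvx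
  linarith
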